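/- arXiv:1612.09245 — 4 statements merged into one kernel-verified Lean document; each statement's English description precedes it below -/
import Mathlib

section
/- Let n ≥ 3 and assume the exponent conditions p, q ≥ 1, r, s ≥ 0, p - s ≥ q - r > -1, and a, b > n/(n-2) with a, b defined by a = n(pq-(r-1)(s-1))/(2(p-s+1)), b = n(pq-(r-1)(s-1))/(2(q-r+1)). If s ≥ 1, then q + s > n/(n-2). -/
theorem stmt_3 (n : ℕ) (hn : 3 ≤ n) (p q r s : ℝ)
    (hp : 1 ≤ p) (hq : 1 ≤ q) (hr : 0 ≤ r) (hs : 0 ≤ s)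
    (h1 : q - r ≤ p - s) (h2 : -1 < q - r)
    (a b : ℝ)
    (ha : a = n * (p * q - (r - 1) * (s - 1)) / (2 * (p - s + 1)))
    (hb : b = n * (p * q - (r - 1) * (s - 1)) / (2 * (q - r + 1)))
    (ha' : (n : ℝ) / (n - 2) < a) (hb' : (n : ℝ) / (n - 2) < b)
    (hs1 : 1 ≤ s) :
    (n : ℝ) / (n - 2) < q + s := by
  have hn3 : (3:ℝ) ≤ (n:ℝ) := by exact_mod_cast hn
  have hn2 : (0:ℝ) < (n:ℝ) - 2 := by linarith
  have hn0 : (0:ℝ) < (n:ℝ) := by linarith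
  have hD : (0:ℝ) < p - s + 1 := by linarith
  rw [ha, div_lt_div_iff₀ hn2 (by linarith : (0:ℝ) < 2 * (p - s + 1))] at ha'
  rw [div_lt_iff₀ hn2]
  have key : p * q - (r - 1) * (s - 1) ≤ (q + s - 1) * (p - s + 1) := by
    nlinarith [mul_nonneg (sub_nonneg.2 hs1) (by linarith : (0:ℝ) ≤ p + r - q - s)]
  -- from ha' : n * (2*(p-s+1)) < n*(pq-(r-1)(s-1)) * (n-2)
  have h3 : 2 * (p - s + 1) < (p * q - (r - 1) * (s - 1)) * ((n:ℝ) - 2) := by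
    have := (mul_lt_mul_iff_right₀ hn0).mp (by linarith [ha'] : (n:ℝ) * (2 * (p - s + 1)) < (n:ℝ) * ((p * q - (r - 1) * (s - 1)) * ((n:ℝ) - 2)))
    linarith
  have h4 : 2 * (p - s + 1) < (q + s - 1) * (p - s + 1) * ((n:ℝ) - 2) := by
    nlinarith [mul_le_mul_of_nonneg_right key (le_of_lt hn2)]
  have h5 : (2:ℝ) < (q + s - 1) * ((n:ℝ) - 2) := by
    have := (mul_lt_mul_iff_left₀ hD).mp (by nlinarith : 2 * (p - s + 1) < ((q + s - 1) * ((n:ℝ) - 2)) * (p - s + 1))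
    linarith
  nlinarith
end

section
/- Let f₁ ∈ L¹(ℝⁿ) and f₂ in weak-L^σ(ℝⁿ) for some σ ∈ (1, ∞). Then f₁ * f₂ lies in weak-L^σ(ℝⁿ) and ‖f₁ * f₂‖_{L^{σ,∞}} ≤ C ‖f₁‖_{L¹} ‖f₂‖_{L^{σ,∞}} for a constant C depending only on σ and n. -/
open MeasureTheory
open scoped ENNReal

/-- The weak `L^σ` quasi-norm `sup_{h>0} h · μ({|f| > h})^{1/σ}`. -/
noncomputable def weakNorm {α : Type*} [MeasurableSpace α] (μ : Measure α)
    (f : α → ℝ) (σ : ℝ) : ℝ≥0∞ :=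
  ⨆ h : {h : ℝ // 0 < h}, ENNReal.ofReal h.1 * μ {x | h.1 < |f x|} ^ (1 / σ)

lemma weakNorm_dist {α : Type*} [MeasurableSpace α] (μ : Measure α)
    (f : α → ℝ) {σ : ℝ} (hσ : 0 < σ) {t : ℝ} (ht : 0 < t) :
    μ {x | t < |f x|} ≤ (weakNorm μ f σ) ^ σ * (ENNReal.ofReal t) ^ (-σ) := by
  have key : ENNReal.ofReal t * μ {x | t < |f x|} ^ (1 / σ) ≤ weakNorm μ f σ :=
    le_iSup (fun h : {h : ℝ // 0 < h} =>
      ENNReal.ofReal h.1 * μ {x | h.1 < |f x|} ^ (1 / σ)) ⟨t, ht⟩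
  have ht0 : ENNReal.ofReal t ≠ 0 := by
    simp [ENNReal.ofReal_eq_zero]; linarith
  have ht1 : ENNReal.ofReal t ≠ ⊤ := ENNReal.ofReal_ne_top
  have h2 : μ {x | t < |f x|} ^ (1 / σ) ≤ weakNorm μ f σ * (ENNReal.ofReal t)⁻¹ := by
    rw [mul_comm, ← ENNReal.le_div_iff_mul_le (Or.inl ht0) (Or.inl ht1)] at key
    rwa [div_eq_mul_inv] at key
  have h3 : (μ {x | t < |f x|} ^ (1 / σ)) ^ σ ≤
      (weakNorm μ f σ * (ENNReal.ofReal t)⁻¹) ^ σ :=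
    ENNReal.rpow_le_rpow h2 hσ.le
  rwa [← ENNReal.rpow_mul, one_div, inv_mul_cancel₀ hσ.ne', ENNReal.rpow_one,
    ENNReal.mul_rpow_of_nonneg _ _ hσ.le, ENNReal.inv_rpow, ← ENNReal.rpow_neg] at h3

lemma tail_bound {α : Type*} [MeasurableSpace α] (μ : Measure α) {f₂ : α → ℝ}
    (hf₂ : Measurable f₂) {σ : ℝ} (hσ : 1 < σ) {M : ℝ} (hM : 0 < M) :
    ∫⁻ y, ENNReal.ofReal (Set.indicator {z | M < |f₂ z|} (fun z => |f₂ z|) y) ∂μ ≤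
      (weakNorm μ f₂ σ) ^ σ * ENNReal.ofReal (M ^ (1 - σ) * (σ / (σ - 1))) := by
  set A := weakNorm μ f₂ σ with hA
  have hσ0 : (0:ℝ) < σ := by linarith
  set S : Set α := {z | M < |f₂ z|} with hS
  have hSm : MeasurableSet S := measurableSet_lt measurable_const hf₂.abs
  set g : α → ℝ := Set.indicator S (fun z => |f₂ z|) with hg
  have hg_nn : 0 ≤ g := fun z => Set.indicator_nonneg (fun z _ => abs_nonneg _) z
  have hg_m : Measurable g := (hf₂.abs).indicator hSm
  rw [lintegral_eq_lintegral_meas_lt μ (Filter.Eventually.of_forall hg_nn) hg_m.aemeasurable]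
  have hsplit : Set.Ioi (0:ℝ) = Set.Ioc 0 M ∪ Set.Ioi M := (Set.Ioc_union_Ioi_eq_Ioi hM.le).symm
  rw [hsplit, Measure.restrict_union (Set.Ioc_disjoint_Ioi le_rfl) measurableSet_Ioi,
    lintegral_add_measure]
  have part1 : ∫⁻ t in Set.Ioc (0:ℝ) M, μ {a | t < g a} ≤ A ^ σ * ENNReal.ofReal (M ^ (1 - σ)) := by
    have hb : ∀ t ∈ Set.Ioc (0:ℝ) M, μ {a | t < g a} ≤ A ^ σ * (ENNReal.ofReal M) ^ (-σ) := by
      intro t ht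
      have hset : {a | t < g a} = S := by
        ext a
        simp only [Set.mem_setOf_eq, hg]
        by_cases ha : a ∈ S
        · simp only [Set.indicator_of_mem ha]
          constructor
          · intro _; exact ha
          · intro _; exact lt_of_le_of_lt ht.2 ha
        · simp only [Set.indicator_of_notMem ha]
          constructor
          · intro h'; exact absurd (ht.1.trans h') (lt_irrefl 0)
          · intro h'; exact absurd h' ha
      rw [hset]
      exact weakNorm_dist μ f₂ hσ0 hM
    calc ∫⁻ t in Set.Ioc (0:ℝ) M, μ {a | t < g a}
        ≤ ∫⁻ _ in Set.Ioc (0:ℝ) M, A ^ σ * (ENNReal.ofReal M) ^ (-σ) :=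
          setLIntegral_mono' measurableSet_Ioc hb
      _ = A ^ σ * (ENNReal.ofReal M) ^ (-σ) * ENNReal.ofReal M := by
          rw [setLIntegral_const, Real.volume_Ioc, sub_zero]
      _ = A ^ σ * ENNReal.ofReal (M ^ (1 - σ)) := by
          rw [mul_assoc]
          congr 1
          have hMne : ENNReal.ofReal M ≠ 0 := by
            simp only [ne_eq, ENNReal.ofReal_eq_zero, not_le]
            linarith
          rw [← ENNReal.ofReal_rpow_of_pos hM,
            show (1 - σ) = (-σ) + 1 by ring,
            ENNReal.rpow_add _ _ hMne ENNReal.ofReal_ne_top, ENNReal.rpow_one]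
  have part2 : ∫⁻ t in Set.Ioi M, μ {a | t < g a} ≤
      A ^ σ * ENNReal.ofReal (M ^ (1 - σ) / (σ - 1)) := by
    have hb : ∀ t ∈ Set.Ioi M, μ {a | t < g a} ≤ A ^ σ * ENNReal.ofReal (t ^ (-σ)) := by
      intro t ht
      have htpos : 0 < t := hM.trans ht
      have hsub : {a | t < g a} ⊆ {a | t < |f₂ a|} := by
        intro a ha
        simp only [Set.mem_setOf_eq] at ha ⊢
        refine lt_of_lt_of_le ha ?_
        by_cases h : a ∈ S
        · simp [hg, h]
        · simp [hg, h, abs_nonneg]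
      calc μ {a | t < g a} ≤ μ {a | t < |f₂ a|} := measure_mono hsub
        _ ≤ A ^ σ * (ENNReal.ofReal t) ^ (-σ) := weakNorm_dist μ f₂ hσ0 htpos
        _ = A ^ σ * ENNReal.ofReal (t ^ (-σ)) := by rw [ENNReal.ofReal_rpow_of_pos htpos]
    calc ∫⁻ t in Set.Ioi M, μ {a | t < g a}
        ≤ ∫⁻ t in Set.Ioi M, A ^ σ * ENNReal.ofReal (t ^ (-σ)) :=
          setLIntegral_mono' measurableSet_Ioi hb
      _ = A ^ σ * ∫⁻ t in Set.Ioi M, ENNReal.ofReal (t ^ (-σ)) := by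
          rw [lintegral_const_mul]
          exact ENNReal.measurable_ofReal.comp
            (measurable_id.pow measurable_const : Measurable fun t : ℝ => t ^ (-σ))
      _ = A ^ σ * ENNReal.ofReal (M ^ (1 - σ) / (σ - 1)) := by
          congr 1
          rw [← ofReal_integral_eq_lintegral_ofReal
            (integrableOn_Ioi_rpow_of_lt (by linarith) hM)
            (ae_restrict_of_forall_mem measurableSet_Ioi fun t ht =>
              Real.rpow_nonneg (hM.trans ht).le _)]
          rw [integral_Ioi_rpow_of_lt (by linarith) hM]
          congr 1
          rw [show (-σ + 1) = 1 - σ by ring,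
            div_eq_div_iff (by linarith) (by linarith : σ - 1 ≠ 0)]
          ring
  calc (∫⁻ t in Set.Ioc (0:ℝ) M, μ {a | t < g a}) + ∫⁻ t in Set.Ioi M, μ {a | t < g a}
      ≤ A ^ σ * ENNReal.ofReal (M ^ (1 - σ)) + A ^ σ * ENNReal.ofReal (M ^ (1 - σ) / (σ - 1)) :=
        add_le_add part1 part2
    _ = A ^ σ * ENNReal.ofReal (M ^ (1 - σ) * (σ / (σ - 1))) := by
        rw [← mul_add, ← ENNReal.ofReal_add (Real.rpow_nonneg hM.le _)
          (div_nonneg (Real.rpow_nonneg hM.le _) (by linarith))]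
        congr 2
        have hσ1 : σ - 1 ≠ 0 := by linarith
        field_simp
        ring

theorem stmt_6 (n : ℕ) (σ : ℝ) (hσ : 1 < σ) :
    ∃ C : ℝ, 0 < C ∧ ∀ f₁ f₂ : EuclideanSpace ℝ (Fin n) → ℝ,
      Integrable f₁ volume → Measurable f₂ → weakNorm volume f₂ σ < ⊤ →
      weakNorm volume (fun x => ∫ y, f₁ (x - y) * f₂ y) σ < ⊤ ∧
      weakNorm volume (fun x => ∫ y, f₁ (x - y) * f₂ y) σ ≤
        ENNReal.ofReal (C * ∫ y, |f₁ y|) * weakNorm volume f₂ σ := by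
  have hσ0 : (0:ℝ) < σ := by linarith
  set K : ℝ := σ / (σ - 1) with hKdef
  have hK1 : 1 ≤ K := by
    rw [hKdef, le_div_iff₀ (by linarith)]
    linarith
  have hK0 : 0 < K := lt_of_lt_of_le one_pos hK1
  refine ⟨2 * K, by positivity, fun f₁ f₂ hf₁ hf₂ hA2 => ?_⟩
  set A := weakNorm volume f₂ σ with hAdef
  set I : ℝ := ∫ y, |f₁ y| with hIdef
  have hInn : 0 ≤ I := integral_nonneg fun y => abs_nonneg _
  -- measurable representative of f₁
  have hmf := hf₁.aemeasurable
  set f : EuclideanSpace ℝ (Fin n) → ℝ := hmf.mk f₁ with hfdef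
  have hfm : Measurable f := hmf.measurable_mk
  have hff : f₁ =ᵐ[volume] f := hmf.ae_eq_mk
  have hfint : Integrable f volume := hf₁.congr hff
  have hIeq : ∫ y, |f y| = I := by
    rw [hIdef]
    refine integral_congr_ae ?_ |>.symm
    filter_upwards [hff] with y hy
    rw [hy]
  have hconv : (fun x => ∫ y, f₁ (x - y) * f₂ y) = fun x => ∫ y, f (x - y) * f₂ y := by
    funext x
    refine integral_congr_ae ?_
    have h1 : (f₁ ∘ fun y => x - y) =ᵐ[volume] (f ∘ fun y => x - y) :=
      (Measure.measurePreserving_sub_left volume x).quasiMeasurePreserving.ae_eq_comp hff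
    filter_upwards [h1] with y hy
    simp only [Function.comp_apply] at hy
    rw [hy]
  rw [hconv]
  by_cases hI : I = 0
  · -- f₁ vanishes a.e., so the convolution is identically zero
    have h0 : f =ᵐ[volume] 0 := by
      have habs : (fun y => |f y|) =ᵐ[volume] 0 := by
        rw [← integral_eq_zero_iff_of_nonneg (fun y => abs_nonneg (f y)) hfint.abs]
        rw [hIeq]; exact hI
      filter_upwards [habs] with y hy
      simpa [abs_eq_zero] using hy
    have hz : (fun x => ∫ y, f (x - y) * f₂ y) = fun _ => (0:ℝ) := by
      funext x
      have h1 : (f ∘ fun y => x - y) =ᵐ[volume] ((0 : EuclideanSpace ℝ (Fin n) → ℝ) ∘ fun y => x - y) :=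
        (Measure.measurePreserving_sub_left volume x).quasiMeasurePreserving.ae_eq_comp h0
      refine integral_eq_zero_of_ae ?_
      filter_upwards [h1] with y hy
      simp only [Function.comp_apply, Pi.zero_apply] at hy
      simp [hy]
    rw [hz]
    have hwz : weakNorm volume (fun _ : EuclideanSpace ℝ (Fin n) => (0:ℝ)) σ = 0 := by
      rw [weakNorm]
      refine le_antisymm (iSup_le fun h => ?_) zero_le
      have he : {x : EuclideanSpace ℝ (Fin n) | h.1 < |(0:ℝ)|} = ∅ := by
        ext x
        simp only [Set.mem_setOf_eq, abs_zero, Set.mem_empty_iff_false, iff_false, not_lt]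
        exact h.2.le
      rw [he]
      simp [ENNReal.zero_rpow_of_pos (by positivity : 0 < 1/σ)]
      exact Or.inr hσ0
    rw [hwz]
    exact ⟨ENNReal.zero_lt_top, zero_le⟩
  have hIpos : 0 < I := lt_of_le_of_ne hInn (Ne.symm hI)
  -- the lintegral of |f|
  set Ie : ℝ≥0∞ := ∫⁻ z, ENNReal.ofReal |f z| with hIedef
  have hIe : Ie = ENNReal.ofReal I := by
    rw [hIedef, ← hIeq, ofReal_integral_eq_lintegral_ofReal hfint.abs
      (Filter.Eventually.of_forall fun y => abs_nonneg _)]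
  -- key estimate
  have key : ∀ h : ℝ, 0 < h →
      ENNReal.ofReal h *
        (volume {x : EuclideanSpace ℝ (Fin n) | h < |∫ y, f (x - y) * f₂ y|}) ^ (1/σ) ≤
      ENNReal.ofReal (2 * K * I) * A := by
    intro h hh
    set h' : ℝ := h / 2 with hh'def
    have hh' : 0 < h' := by positivity
    set M : ℝ := h' / I with hMdef
    have hM : 0 < M := by positivity
    set S : Set (EuclideanSpace ℝ (Fin n)) := {z | M < |f₂ z|} with hSdef
    set ind : EuclideanSpace ℝ (Fin n) → ℝ := S.indicator (fun z => |f₂ z|) with hinddef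
    have hind_nn : ∀ y, 0 ≤ ind y := fun y => Set.indicator_nonneg (fun z _ => abs_nonneg _) y
    have hSm : MeasurableSet S := measurableSet_lt measurable_const hf₂.abs
    have hind_m : Measurable ind := (hf₂.abs).indicator hSm
    set g : EuclideanSpace ℝ (Fin n) → ℝ≥0∞ :=
      fun x => ∫⁻ y, ENNReal.ofReal |f (x - y)| * ENNReal.ofReal (ind y) with hgdef
    -- measurability of the kernel
    have hker : Measurable (Function.uncurry fun (x y : EuclideanSpace ℝ (Fin n)) =>
        ENNReal.ofReal |f (x - y)| * ENNReal.ofReal (ind y)) := by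
      refine Measurable.mul (f := fun p : EuclideanSpace ℝ (Fin n) × EuclideanSpace ℝ (Fin n) => ENNReal.ofReal |f (p.1 - p.2)|)
        (g := fun p => ENNReal.ofReal (ind p.2)) ?_ ?_
      · exact (hfm.abs.ennreal_ofReal).comp measurable_sub
      · exact (hind_m.ennreal_ofReal).comp measurable_snd
    have hg_m : Measurable g := hker.lintegral_prod_right
    -- pointwise bound
    have hpt : ∀ x, ENNReal.ofReal |∫ y, f (x - y) * f₂ y| ≤ ENNReal.ofReal h' + g x := by
      intro x
      have e1 : ENNReal.ofReal |∫ y, f (x - y) * f₂ y| ≤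
          ∫⁻ y, ENNReal.ofReal |f (x - y) * f₂ y| := by
        calc ENNReal.ofReal |∫ y, f (x - y) * f₂ y| = ‖∫ y, f (x - y) * f₂ y‖ₑ :=
            (Real.enorm_eq_ofReal_abs _).symm
          _ ≤ ∫⁻ y, ‖f (x - y) * f₂ y‖ₑ := enorm_integral_le_lintegral_enorm _
          _ = ∫⁻ y, ENNReal.ofReal |f (x - y) * f₂ y| :=
            lintegral_congr fun y => Real.enorm_eq_ofReal_abs _
      have e2 : ∫⁻ y, ENNReal.ofReal |f (x - y) * f₂ y| ≤
          ∫⁻ y, ENNReal.ofReal |f (x - y)| * ENNReal.ofReal M +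
            ENNReal.ofReal |f (x - y)| * ENNReal.ofReal (ind y) := by
        refine lintegral_mono fun y => ?_
        rw [abs_mul, ENNReal.ofReal_mul (abs_nonneg _), ← mul_add,
          ← ENNReal.ofReal_add hM.le (hind_nn y)]
        refine mul_le_mul_right (ENNReal.ofReal_le_ofReal ?_) _
        by_cases hy : y ∈ S
        · rw [hinddef, Set.indicator_of_mem hy]
          linarith [abs_nonneg (f₂ y), hM]
        · rw [hinddef, Set.indicator_of_notMem hy]
          rw [hSdef, Set.mem_setOf_eq, not_lt] at hy
          linarith
      have e3 : (∫⁻ y, ENNReal.ofReal |f (x - y)| * ENNReal.ofReal M +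
            ENNReal.ofReal |f (x - y)| * ENNReal.ofReal (ind y))
          = ENNReal.ofReal h' + g x := by
        have hm1 : Measurable fun y : EuclideanSpace ℝ (Fin n) =>
            ENNReal.ofReal |f (x - y)| :=
          (hfm.abs.ennreal_ofReal).comp (measurable_const.sub measurable_id)
        rw [lintegral_add_left (hm1.mul_const _)]
        congr 1
        rw [lintegral_mul_const _ hm1]
        have htr : ∫⁻ y, ENNReal.ofReal |f (x - y)| = Ie :=
          (Measure.measurePreserving_sub_left volume x).lintegral_comp (hfm.abs.ennreal_ofReal)
        rw [htr, hIe, ← ENNReal.ofReal_mul hInn]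
        congr 1
        rw [hMdef]
        field_simp
      exact e1.trans (e2.trans (le_of_eq e3))
    -- set inclusion
    have hsub : {x : EuclideanSpace ℝ (Fin n) | h < |∫ y, f (x - y) * f₂ y|} ⊆
        {x | ENNReal.ofReal h' ≤ g x} := by
      intro x hx
      simp only [Set.mem_setOf_eq] at hx ⊢
      have h1 : ENNReal.ofReal h ≤ ENNReal.ofReal h' + g x :=
        le_trans (ENNReal.ofReal_le_ofReal hx.le) (hpt x)
      have h2 : ENNReal.ofReal h = ENNReal.ofReal h' + ENNReal.ofReal h' := by
        rw [← ENNReal.ofReal_add hh'.le hh'.le]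
        congr 1
        rw [hh'def]; ring
      rw [h2] at h1
      exact (ENNReal.add_le_add_iff_left ENNReal.ofReal_ne_top).mp h1
    -- Markov
    have hmeas : volume {x : EuclideanSpace ℝ (Fin n) | h < |∫ y, f (x - y) * f₂ y|} ≤
        (∫⁻ x, g x) / ENNReal.ofReal h' := by
      refine le_trans (measure_mono hsub) ?_
      exact meas_ge_le_lintegral_div hg_m.aemeasurable
        (ENNReal.ofReal_pos.mpr hh').ne' ENNReal.ofReal_ne_top
    -- Fubini
    have hfub : (∫⁻ x, g x) = Ie * ∫⁻ y, ENNReal.ofReal (ind y) := by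
      rw [hgdef]
      rw [lintegral_lintegral_swap hker.aemeasurable]
      have hin : ∀ y, (∫⁻ x, ENNReal.ofReal |f (x - y)| * ENNReal.ofReal (ind y))
          = Ie * ENNReal.ofReal (ind y) := by
        intro y
        have hm2 : Measurable fun x : EuclideanSpace ℝ (Fin n) => ENNReal.ofReal |f (x - y)| :=
          (hfm.abs.ennreal_ofReal).comp (measurable_id.sub measurable_const)
        rw [lintegral_mul_const _ hm2]
        congr 1
        exact lintegral_sub_right_eq_self (μ := volume) (fun z => ENNReal.ofReal |f z|) y
      rw [lintegral_congr hin]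
      exact lintegral_const_mul _ hind_m.ennreal_ofReal
    have htail : (∫⁻ y, ENNReal.ofReal (ind y)) ≤ A ^ σ * ENNReal.ofReal (M ^ (1 - σ) * K) :=
      tail_bound volume hf₂ hσ hM
    -- combine
    have hvol : volume {x : EuclideanSpace ℝ (Fin n) | h < |∫ y, f (x - y) * f₂ y|} ≤
        A ^ σ * ENNReal.ofReal (K * I ^ σ * h' ^ (-σ)) := by
      refine hmeas.trans ?_
      rw [hfub, hIe]
      calc ENNReal.ofReal I * (∫⁻ y, ENNReal.ofReal (ind y)) / ENNReal.ofReal h'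
          ≤ ENNReal.ofReal I * (A ^ σ * ENNReal.ofReal (M ^ (1 - σ) * K)) /
              ENNReal.ofReal h' := by gcongr
        _ = A ^ σ * (ENNReal.ofReal I * ENNReal.ofReal (M ^ (1 - σ) * K) /
              ENNReal.ofReal h') := by
            rw [div_eq_mul_inv, div_eq_mul_inv]
            ring
        _ = A ^ σ * (ENNReal.ofReal (I * (M ^ (1 - σ) * K)) / ENNReal.ofReal h') := by
            rw [← ENNReal.ofReal_mul hInn]
        _ = A ^ σ * ENNReal.ofReal (I * (M ^ (1 - σ) * K) / h') := by
            rw [ENNReal.ofReal_div_of_pos hh']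
        _ = A ^ σ * ENNReal.ofReal (K * I ^ σ * h' ^ (-σ)) := by
            congr 1
            refine congrArg ENNReal.ofReal ?_
            have hMrw : M ^ (1 - σ) = h' ^ (1 - σ) * I ^ (σ - 1) := by
              rw [hMdef, Real.div_rpow hh'.le hInn, show σ - 1 = -(1 - σ) by ring,
                Real.rpow_neg hInn, div_eq_mul_inv]
            rw [hMrw]
            have e1 : I * I ^ (σ - 1) = I ^ σ := by
              calc I * I ^ (σ - 1) = I ^ (1:ℝ) * I ^ (σ - 1) := by rw [Real.rpow_one]
                _ = I ^ (1 + (σ - 1)) := (Real.rpow_add hIpos 1 (σ - 1)).symm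
                _ = I ^ σ := by norm_num
            have e2 : h' ^ (1 - σ) / h' = h' ^ (-σ) := by
              calc h' ^ (1 - σ) / h' = h' ^ (1 - σ) * h' ^ (-1:ℝ) := by
                    rw [Real.rpow_neg_one, div_eq_mul_inv]
                _ = h' ^ ((1 - σ) + (-1)) := (Real.rpow_add hh' _ _).symm
                _ = h' ^ (-σ) := by rw [show (1 - σ) + (-1:ℝ) = -σ by ring]
            calc I * (h' ^ (1 - σ) * I ^ (σ - 1) * K) / h'
                = (I * I ^ (σ - 1)) * K * (h' ^ (1 - σ) / h') := by ring
              _ = I ^ σ * K * h' ^ (-σ) := by rw [e1, e2]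
              _ = K * I ^ σ * h' ^ (-σ) := by ring
    -- raise to power 1/σ
    have hRpos : 0 < K * I ^ σ * h' ^ (-σ) := by
      have := Real.rpow_pos_of_pos hIpos σ
      have := Real.rpow_pos_of_pos hh' (-σ)
      positivity
    have e3 : (K * I ^ σ * h' ^ (-σ)) ^ (1/σ) = K ^ (1/σ) * I * h'⁻¹ := by
      rw [Real.mul_rpow (by positivity) (Real.rpow_pos_of_pos hh' (-σ)).le,
        Real.mul_rpow hK0.le (Real.rpow_pos_of_pos hIpos σ).le,
        ← Real.rpow_mul hInn, ← Real.rpow_mul hh'.le,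
        show σ * (1/σ) = 1 by field_simp,
        show -σ * (1/σ) = -1 by field_simp,
        Real.rpow_one, Real.rpow_neg_one]
    have hrp : (volume {x : EuclideanSpace ℝ (Fin n) | h < |∫ y, f (x - y) * f₂ y|}) ^ (1/σ) ≤
        A * ENNReal.ofReal (K ^ (1/σ) * I * h'⁻¹) := by
      calc (volume {x : EuclideanSpace ℝ (Fin n) | h < |∫ y, f (x - y) * f₂ y|}) ^ (1/σ)
          ≤ (A ^ σ * ENNReal.ofReal (K * I ^ σ * h' ^ (-σ))) ^ (1/σ) :=
            ENNReal.rpow_le_rpow hvol (by positivity)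
        _ = (A ^ σ) ^ (1/σ) * (ENNReal.ofReal (K * I ^ σ * h' ^ (-σ))) ^ (1/σ) :=
            ENNReal.mul_rpow_of_nonneg _ _ (by positivity)
        _ = A * ENNReal.ofReal (K ^ (1/σ) * I * h'⁻¹) := by
            rw [← ENNReal.rpow_mul, show σ * (1/σ) = 1 by field_simp, ENNReal.rpow_one,
              ENNReal.ofReal_rpow_of_pos hRpos, e3]
    calc ENNReal.ofReal h *
          (volume {x : EuclideanSpace ℝ (Fin n) | h < |∫ y, f (x - y) * f₂ y|}) ^ (1/σ)
        ≤ ENNReal.ofReal h * (A * ENNReal.ofReal (K ^ (1/σ) * I * h'⁻¹)) := by gcongr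
      _ = A * (ENNReal.ofReal h * ENNReal.ofReal (K ^ (1/σ) * I * h'⁻¹)) := by ring
      _ = A * ENNReal.ofReal (h * (K ^ (1/σ) * I * h'⁻¹)) := by
          rw [← ENNReal.ofReal_mul hh.le]
      _ ≤ A * ENNReal.ofReal (2 * K * I) := by
          refine mul_le_mul_right (ENNReal.ofReal_le_ofReal ?_) _
          have hid : h * (K ^ (1/σ) * I * h'⁻¹) = 2 * K ^ (1/σ) * I := by
            rw [hh'def]
            field_simp
          rw [hid]
          have hKK : K ^ (1/σ) ≤ K := by
            calc K ^ (1/σ) ≤ K ^ (1:ℝ) :=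
                Real.rpow_le_rpow_of_exponent_le hK1 (by rw [div_le_one hσ0]; linarith)
              _ = K := Real.rpow_one K
          nlinarith
      _ = ENNReal.ofReal (2 * K * I) * A := mul_comm _ _
  -- conclude
  have hle : weakNorm volume (fun x => ∫ y, f (x - y) * f₂ y) σ ≤
      ENNReal.ofReal (2 * K * I) * A := by
    rw [weakNorm]
    exact iSup_le fun h => key h.1 h.2
  constructor
  · exact lt_of_le_of_lt hle (ENNReal.mul_lt_top ENNReal.ofReal_lt_top hA2)
  · exact hle
end

section
/- Let n ≥ 3 and suppose the comparison inequality hypotheses of the system hold with p ≥ s and u ≥ 0 on ℝⁿ. If (u,v) is a finite energy solution (so that in particular v satisfies the decay bound |v(x)| ≤ K(1+|x|^n)^{-1/b}), then for all x ∈ ℝⁿ, |v(x)|^{p-s+1}/(p-s+1) ≤ u(x)^{q-r+1}/(q-r+1). -/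
open MeasureTheory

/-- The Laplacian of a function on Euclidean space, as the sum of the pure second
derivatives in the coordinate directions. -/
noncomputable def lap {n : ℕ} (u : EuclideanSpace ℝ (Fin n) → ℝ)
    (x : EuclideanSpace ℝ (Fin n)) : ℝ :=
  ∑ i, iteratedFDeriv ℝ 2 u x ![EuclideanSpace.single i 1, EuclideanSpace.single i 1]


set_option maxHeartbeats 1000000

open Filter Topology

/-! ### 1D helpers -/

lemma ev_diff {F : ℝ → ℝ} {t₀ : ℝ} (hF : ContDiffAt ℝ 2 F t₀) :
    ∀ᶠ t in 𝓝 t₀, DifferentiableAt ℝ F t :=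
  (hF.eventually (by norm_num)).mono fun y hy => hy.differentiableAt (by norm_num)

lemma contDiffAt_deriv {F : ℝ → ℝ} {t₀ : ℝ} (hF : ContDiffAt ℝ 2 F t₀) :
    ContDiffAt ℝ 1 (deriv F) t₀ := by
  have h1 : ContDiffAt ℝ 1 (fderiv ℝ F) t₀ := hF.fderiv_right (by norm_num)
  have : deriv F = fun t => (ContinuousLinearMap.apply ℝ ℝ (1:ℝ)) (fderiv ℝ F t) := rfl
  rw [this]
  exact (ContinuousLinearMap.apply ℝ ℝ (1:ℝ)).contDiff.contDiffAt.comp _ h1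

lemma diff_deriv {F : ℝ → ℝ} {t₀ : ℝ} (hF : ContDiffAt ℝ 2 F t₀) :
    DifferentiableAt ℝ (deriv F) t₀ :=
  (contDiffAt_deriv hF).differentiableAt (by norm_num)

lemma cont_deriv2 {F : ℝ → ℝ} {t₀ : ℝ} (hF : ContDiffAt ℝ 2 F t₀) :
    ContinuousAt (deriv (deriv F)) t₀ := by
  have h1 : ContDiffAt ℝ 1 (deriv F) t₀ := contDiffAt_deriv hF
  have h0 : ContDiffAt ℝ 0 (fderiv ℝ (deriv F)) t₀ := h1.fderiv_right (by norm_num)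
  have : deriv (deriv F) = fun t => (ContinuousLinearMap.apply ℝ ℝ (1:ℝ)) (fderiv ℝ (deriv F) t) := rfl
  rw [this]
  exact ((ContinuousLinearMap.apply ℝ ℝ (1:ℝ)).continuous.continuousAt).comp h0.continuousAt

/-- second derivative test, 1D -/
lemma deriv2_nonpos_of_isLocalMax {F : ℝ → ℝ} (hF : ContDiffAt ℝ 2 F 0)
    (hmax : IsLocalMax F 0) : deriv (deriv F) 0 ≤ 0 := by
  by_contra hpos
  push_neg at hpos
  have hc : ContinuousAt (deriv (deriv F)) 0 := cont_deriv2 hF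
  have hev : ∀ᶠ t in 𝓝 (0:ℝ), 0 < deriv (deriv F) t :=
    continuousAt_const.eventually_lt hc hpos
  have hev2 : ∀ᶠ t in 𝓝 (0:ℝ), ContDiffAt ℝ 2 F t := hF.eventually (by norm_num)
  have hall : ∀ᶠ t in 𝓝 (0:ℝ),
      0 < deriv (deriv F) t ∧ ContDiffAt ℝ 2 F t ∧ F t ≤ F 0 := by
    filter_upwards [hev, hev2, hmax] with t h1 h2 h3; exact ⟨h1, h2, h3⟩
  obtain ⟨δ, hδ, hball⟩ := Metric.eventually_nhds_iff_ball.mp hall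
  have hIcc : Set.Icc (-(δ/2)) (δ/2) ⊆ Metric.ball (0:ℝ) δ := by
    intro t ht
    rw [Set.mem_Icc] at ht
    rw [Metric.mem_ball, Real.dist_eq, sub_zero, abs_lt]
    constructor <;> linarith [ht.1, ht.2]
  have hconv : StrictConvexOn ℝ (Set.Icc (-(δ/2)) (δ/2)) F := by
    apply strictConvexOn_of_deriv2_pos' (convex_Icc _ _)
    · intro t ht
      exact ((hball t (hIcc ht)).2.1.continuousAt).continuousWithinAt
    · intro t ht
      have := (hball t (hIcc ht)).1
      simpa [Function.iterate_succ, Function.comp] using this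
  have hmem1 : -(δ/2) ∈ Set.Icc (-(δ/2)) (δ/2) := by constructor <;> nlinarith
  have hmem2 : (δ/2) ∈ Set.Icc (-(δ/2)) (δ/2) := by constructor <;> nlinarith
  have hne : -(δ/2) ≠ (δ/2) := by nlinarith
  have := hconv.2 hmem1 hmem2 hne (by norm_num : (0:ℝ) < 1/2) (by norm_num : (0:ℝ) < 1/2)
    (by norm_num)
  simp only [smul_eq_mul] at this
  have h0 : (1/2:ℝ) * -(δ/2) + (1/2:ℝ) * (δ/2) = 0 := by ring
  rw [h0] at this
  have hF1 : F (-(δ/2)) ≤ F 0 := (hball _ (hIcc hmem1)).2.2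
  have hF2 : F (δ/2) ≤ F 0 := (hball _ (hIcc hmem2)).2.2
  nlinarith

/-! ### Bridge: iteratedFDeriv along a line -/

variable {n : ℕ}

local notation "E" => EuclideanSpace ℝ (Fin n)

lemma line_contDiff (x h : E) : ContDiff ℝ 2 (fun t : ℝ => x + t • h) :=
  contDiff_const.add (contDiff_id.smul contDiff_const)

lemma line_zero (x h : E) : x + (0:ℝ) • h = x := by simp

lemma contDiffAt_line_comp {f : E → ℝ} {x : E} (h : E) (hf : ContDiffAt ℝ 2 f x) :
    ContDiffAt ℝ 2 (fun t : ℝ => f (x + t • h)) 0 := by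
  have hf' : ContDiffAt ℝ 2 f ((0:ℝ) • h + x) := by
    rw [zero_smul, zero_add]; exact hf
  have hl : ContDiffAt ℝ 2 (fun t : ℝ => t • h + x) 0 :=
    ((contDiff_id.smul contDiff_const).add contDiff_const).contDiffAt
  have := hf'.comp (0:ℝ) hl
  simpa [add_comm, Function.comp_def] using this

lemma bridge {f : E → ℝ} {x : E} (hf : ContDiffAt ℝ 2 f x) (h : E) :
    iteratedFDeriv ℝ 2 f x ![h, h] = deriv (deriv (fun t : ℝ => f (x + t • h))) 0 := by
  rw [iteratedFDeriv_two_apply]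
  simp only [Matrix.cons_val_zero, Matrix.cons_val_one, Matrix.head_cons]
  -- eventual differentiability of f near x
  have hev : ∀ᶠ y in 𝓝 x, DifferentiableAt ℝ f y :=
    (hf.eventually (by norm_num)).mono fun y hy => hy.differentiableAt (by norm_num)
  have hlinec : Continuous (fun t : ℝ => x + t • h) := (line_contDiff x h).continuous
  have hline0 : Filter.Tendsto (fun t : ℝ => x + t • h) (𝓝 0) (𝓝 x) :=
    hlinec.tendsto' 0 x (line_zero x h)
  have hevt : ∀ᶠ t in 𝓝 (0:ℝ), DifferentiableAt ℝ f (x + t • h) := hline0.eventually hev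
  -- deriv of the line restriction
  have hderiv : ∀ᶠ t in 𝓝 (0:ℝ),
      deriv (fun s : ℝ => f (x + s • h)) t = (fderiv ℝ f (x + t • h)) h := by
    filter_upwards [hevt] with t ht
    have hl : HasDerivAt (fun s : ℝ => x + s • h) h t := by
      simpa using ((hasDerivAt_id t).smul_const h).const_add x
    exact (ht.hasFDerivAt.comp_hasDerivAt t hl).deriv
  rw [Filter.EventuallyEq.deriv_eq hderiv]
  -- second derivative
  have hdf : DifferentiableAt ℝ (fderiv ℝ f) x :=
    (show ContDiffAt ℝ 1 (fderiv ℝ f) x from hf.fderiv_right (by norm_num)).differentiableAt (by norm_num)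
  have hl0 : HasDerivAt (fun s : ℝ => x + s • h) h 0 := by
    simpa using ((hasDerivAt_id (0:ℝ)).smul_const h).const_add x
  have h2 : HasDerivAt (fun t : ℝ => fderiv ℝ f (x + t • h)) (fderiv ℝ (fderiv ℝ f) x h) 0 := by
    have hD : HasFDerivAt (fderiv ℝ f) (fderiv ℝ (fderiv ℝ f) x) (x + (0:ℝ) • h) := by
      rw [line_zero]; exact hdf.hasFDerivAt
    exact hD.comp_hasDerivAt 0 hl0
  have h3 : HasDerivAt (fun t : ℝ => (fderiv ℝ f (x + t • h)) h)
      ((fderiv ℝ (fderiv ℝ f) x h) h) 0 :=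
    (ContinuousLinearMap.apply ℝ ℝ h).hasFDerivAt.comp_hasDerivAt 0 h2
  exact h3.deriv.symm

/-- lap as a sum of line second derivatives -/
lemma lap_eq_sum {f : E → ℝ} {x : E} (hf : ContDiffAt ℝ 2 f x) :
    lap f x = ∑ i, deriv (deriv (fun t : ℝ => f (x + t • EuclideanSpace.single i 1))) 0 := by
  unfold lap
  exact Finset.sum_congr rfl fun i _ => bridge hf _

/-- The second derivative test / local maximum principle. -/
lemma lap_nonpos_of_isLocalMax {f : E → ℝ} {x : E} (hf : ContDiffAt ℝ 2 f x)
    (hmax : IsLocalMax f x) : lap f x ≤ 0 := by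
  rw [lap_eq_sum hf]
  apply Finset.sum_nonpos
  intro i _
  apply deriv2_nonpos_of_isLocalMax (contDiffAt_line_comp _ hf)
  have hline0 : Filter.Tendsto (fun t : ℝ => x + t • EuclideanSpace.single i 1) (𝓝 0) (𝓝 x) :=
    (line_contDiff x _).continuous.tendsto' 0 x (line_zero x _)
  refine (hline0.eventually hmax).mono fun t ht => ?_
  show f (x + t • _) ≤ f (x + (0:ℝ) • _)
  rw [line_zero]
  exact ht

/-! ### 1D linearity and chain rule for second derivatives -/

lemma d2_add {F G : ℝ → ℝ} {t₀ : ℝ} (hF : ContDiffAt ℝ 2 F t₀) (hG : ContDiffAt ℝ 2 G t₀) :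
    deriv (deriv (fun t => F t + G t)) t₀ = deriv (deriv F) t₀ + deriv (deriv G) t₀ := by
  have hev : deriv (fun t => F t + G t) =ᶠ[𝓝 t₀] fun t => deriv F t + deriv G t := by
    filter_upwards [ev_diff hF, ev_diff hG] with t h1 h2
    exact deriv_add h1 h2
  rw [hev.deriv_eq, deriv_fun_add (diff_deriv hF) (diff_deriv hG)]

lemma d2_const_mul {F : ℝ → ℝ} {t₀ : ℝ} (A : ℝ) (hF : ContDiffAt ℝ 2 F t₀) :
    deriv (deriv (fun t => A * F t)) t₀ = A * deriv (deriv F) t₀ := by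
  have hev : deriv (fun t => A * F t) =ᶠ[𝓝 t₀] fun t => A * deriv F t := by
    filter_upwards [ev_diff hF] with t h1
    exact deriv_const_mul A h1
  rw [hev.deriv_eq, deriv_const_mul A (diff_deriv hF)]

lemma d2_comp {φ G : ℝ → ℝ} {c : ℝ} (hG : ContDiffAt ℝ 2 G 0) (hc : G 0 = c)
    (hφ' : ContDiffAt ℝ 2 φ c) :
    deriv (deriv (fun t => φ (G t))) 0 =
      deriv (deriv φ) c * (deriv G 0)^2 + deriv φ c * deriv (deriv G) 0 := by
  subst hc
  have hφ : ContDiffAt ℝ 2 φ (G 0) := hφ'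
  have hGc : ContinuousAt G 0 := hG.continuousAt
  have hevφ : ∀ᶠ t in 𝓝 (0:ℝ), DifferentiableAt ℝ φ (G t) :=
    hGc.eventually ((hφ.eventually (by norm_num)).mono fun y hy => hy.differentiableAt (by norm_num))
  have hev : deriv (fun t => φ (G t)) =ᶠ[𝓝 (0:ℝ)] fun t => deriv φ (G t) * deriv G t := by
    filter_upwards [ev_diff hG, hevφ] with t h1 h2
    exact deriv_comp t h2 h1
  rw [hev.deriv_eq]
  have hA : HasDerivAt (fun t => deriv φ (G t)) (deriv (deriv φ) (G 0) * deriv G 0) 0 := by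
    exact HasDerivAt.comp 0 ((diff_deriv hφ).hasDerivAt) ((hG.differentiableAt (by norm_num)).hasDerivAt)
  have hB : HasDerivAt (deriv G) (deriv (deriv G) 0) 0 := (diff_deriv hG).hasDerivAt
  have := (hA.fun_mul hB).deriv
  rw [this]; ring

/-! ### lap linearity and composition -/

lemma lap_add {f g : E → ℝ} {x : E} (hf : ContDiffAt ℝ 2 f x) (hg : ContDiffAt ℝ 2 g x) :
    lap (fun y => f y + g y) x = lap f x + lap g x := by
  rw [lap_eq_sum (hf.add hg), lap_eq_sum hf, lap_eq_sum hg, ← Finset.sum_add_distrib]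
  exact Finset.sum_congr rfl fun i _ =>
    d2_add (contDiffAt_line_comp _ hf) (contDiffAt_line_comp _ hg)

lemma lap_const_mul {f : E → ℝ} {x : E} (A : ℝ) (hf : ContDiffAt ℝ 2 f x) :
    lap (fun y => A * f y) x = A * lap f x := by
  have hAf : ContDiffAt ℝ 2 (fun y => A * f y) x := contDiffAt_const.mul hf
  rw [lap_eq_sum hAf, lap_eq_sum hf, Finset.mul_sum]
  exact Finset.sum_congr rfl fun i _ => d2_const_mul A (contDiffAt_line_comp _ hf)

lemma lap_comp {φ : ℝ → ℝ} {u : E → ℝ} {x : E} (hu : ContDiffAt ℝ 2 u x)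
    (hφ : ContDiffAt ℝ 2 φ (u x)) :
    lap (fun y => φ (u y)) x =
      deriv (deriv φ) (u x) *
        (∑ i, (deriv (fun t : ℝ => u (x + t • EuclideanSpace.single i 1)) 0)^2)
      + deriv φ (u x) * lap u x := by
  have hcomp : ContDiffAt ℝ 2 (fun y => φ (u y)) x := hφ.comp x hu
  rw [lap_eq_sum hcomp, lap_eq_sum hu, Finset.mul_sum, Finset.mul_sum, ← Finset.sum_add_distrib]
  refine Finset.sum_congr rfl fun i _ => ?_
  have hG : ContDiffAt ℝ 2 (fun t : ℝ => u (x + t • EuclideanSpace.single i 1)) 0 :=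
    contDiffAt_line_comp _ hu
  exact d2_comp hG (show u (x + (0:ℝ) • _) = u x by rw [line_zero]) hφ

/-! ### quadratic functions -/

noncomputable def quad (c : ℝ) (z : E) : E → ℝ := fun y => c + ∑ j, (y j - z j)^2

lemma quad_contDiff (c : ℝ) (z : E) : ContDiff ℝ 2 (quad (n := n) c z) := by
  unfold quad
  refine contDiff_const.add (ContDiff.sum fun j _ => ?_)
  have hproj : ContDiff ℝ 2 (fun y : E => y j) := (EuclideanSpace.proj (𝕜 := ℝ) j).contDiff
  exact (hproj.sub contDiff_const).pow 2

lemma quad_line (c : ℝ) (z x : E) (i : Fin n) (t : ℝ) :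
    quad c z (x + t • EuclideanSpace.single i 1) = quad c z x + 2*(x i - z i)*t + t^2 := by
  unfold quad
  have hcoord : ∀ j, (x + t • EuclideanSpace.single i (1:ℝ)) j
      = x j + t * (if j = i then 1 else 0) := by
    intro j
    rw [PiLp.add_apply, PiLp.smul_apply, EuclideanSpace.single_apply]
    simp [smul_eq_mul]
  have hsum : ∀ j ∈ Finset.univ, ((x + t • EuclideanSpace.single i (1:ℝ)) j - z j)^2
      = (x j - z j)^2 + (if j = i then 2*(x i - z i)*t + t^2 else 0) := by
    intro j _
    rw [hcoord j]
    by_cases hji : j = i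
    · subst hji; simp; ring
    · simp [hji]
  rw [Finset.sum_congr rfl hsum, Finset.sum_add_distrib, Finset.sum_ite_eq' Finset.univ i
    (fun _ => 2*(x i - z i)*t + t^2)]
  simp; ring

lemma poly_d1 (A B : ℝ) : deriv (fun t : ℝ => A + B*t + t^2) 0 = B := by
  have h : ∀ t : ℝ, HasDerivAt (fun t : ℝ => A + B*t + t^2) (B + 2*t) t := by
    intro t
    have h1 : HasDerivAt (fun t : ℝ => B*t) B t := by
      simpa using (hasDerivAt_id t).const_mul B
    have h2 : HasDerivAt (fun t : ℝ => t^2) (2*t) t := by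
      simpa using hasDerivAt_pow 2 t
    simpa using ((h1.const_add A).fun_add h2)
  simpa using (h 0).deriv

lemma poly_d2 (A B : ℝ) : deriv (deriv (fun t : ℝ => A + B*t + t^2)) 0 = 2 := by
  have h : ∀ t : ℝ, HasDerivAt (fun t : ℝ => A + B*t + t^2) (B + 2*t) t := by
    intro t
    have h1 : HasDerivAt (fun t : ℝ => B*t) B t := by
      simpa using (hasDerivAt_id t).const_mul B
    have h2 : HasDerivAt (fun t : ℝ => t^2) (2*t) t := by
      simpa using hasDerivAt_pow 2 t
    simpa using ((h1.const_add A).fun_add h2)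
  have hderiv : deriv (fun t : ℝ => A + B*t + t^2) = fun t => B + 2*t :=
    funext fun t => (h t).deriv
  rw [hderiv]
  have : HasDerivAt (fun t : ℝ => B + 2*t) 2 0 := by
    simpa using ((hasDerivAt_id (0:ℝ)).const_mul 2).const_add B
  simpa using this.deriv

lemma quad_line_d1 (c : ℝ) (z x : E) (i : Fin n) :
    deriv (fun t : ℝ => quad c z (x + t • EuclideanSpace.single i 1)) 0 = 2*(x i - z i) := by
  have : (fun t : ℝ => quad c z (x + t • EuclideanSpace.single i 1))
      = fun t => quad c z x + 2*(x i - z i)*t + t^2 := funext fun t => quad_line c z x i t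
  rw [this, poly_d1]

lemma quad_line_d2 (c : ℝ) (z x : E) (i : Fin n) :
    deriv (deriv (fun t : ℝ => quad c z (x + t • EuclideanSpace.single i 1))) 0 = 2 := by
  have : (fun t : ℝ => quad c z (x + t • EuclideanSpace.single i 1))
      = fun t => quad c z x + 2*(x i - z i)*t + t^2 := funext fun t => quad_line c z x i t
  rw [this, poly_d2]

lemma lap_quad (c : ℝ) (z x : E) : lap (quad c z) x = 2*n := by
  rw [lap_eq_sum (quad_contDiff c z).contDiffAt]
  rw [Finset.sum_congr rfl (fun i _ => quad_line_d2 c z x i)]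
  simp [mul_comm]

lemma quad_d1_sq (c : ℝ) (z x : E) :
    ∑ i, (deriv (fun t : ℝ => quad c z (x + t • EuclideanSpace.single i 1)) 0)^2
      = 4 * (quad c z x - c) := by
  rw [Finset.sum_congr rfl (fun i _ => by rw [quad_line_d1 c z x i])]
  unfold quad
  simp only [add_sub_cancel_left]
  rw [Finset.mul_sum]
  exact Finset.sum_congr rfl fun i _ => by ring

lemma quad_nonneg (c : ℝ) (z x : E) : c ≤ quad c z x := by
  unfold quad
  have : (0:ℝ) ≤ ∑ j, (x j - z j)^2 := Finset.sum_nonneg fun j _ => sq_nonneg _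
  linarith

/-! ### rpow and exp derivative facts -/

lemma deriv_rpow_pos {c t₀ : ℝ} (h : 0 < t₀) :
    deriv (fun t : ℝ => t ^ c) t₀ = c * t₀ ^ (c-1) :=
  Real.deriv_rpow_const _ _

lemma deriv2_rpow {c t₀ : ℝ} (h : 0 < t₀) :
    deriv (deriv (fun t : ℝ => t ^ c)) t₀ = c * (c-1) * t₀ ^ (c-2) := by
  have hev : deriv (fun t : ℝ => t ^ c) =ᶠ[𝓝 t₀] fun t => c * t ^ (c-1) := by
    filter_upwards [eventually_gt_nhds h] with t ht
    exact Real.deriv_rpow_const _ _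
  rw [hev.deriv_eq, deriv_const_mul _ (Real.differentiableAt_rpow_const_of_ne _ h.ne'),
    Real.deriv_rpow_const]
  ring

lemma hasDerivAt_expb (lam C t₀ : ℝ) :
    HasDerivAt (fun t : ℝ => Real.exp (-lam * t) - C) (-lam * Real.exp (-lam * t₀)) t₀ := by
  have h1 : HasDerivAt (fun t : ℝ => -lam * t) (-lam) t₀ := by
    simpa using (hasDerivAt_id t₀).const_mul (-lam)
  have h2 := (Real.hasDerivAt_exp (-lam * t₀)).comp t₀ h1
  simpa [mul_comm] using h2.sub_const C

lemma deriv2_expb (lam C t₀ : ℝ) :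
    deriv (deriv (fun t : ℝ => Real.exp (-lam * t) - C)) t₀
      = lam^2 * Real.exp (-lam * t₀) := by
  have hd : deriv (fun t : ℝ => Real.exp (-lam * t) - C)
      = fun t => -lam * Real.exp (-lam * t) := funext fun t => (hasDerivAt_expb lam C t).deriv
  rw [hd]
  have h1 : HasDerivAt (fun t : ℝ => -lam * t) (-lam) t₀ := by
    simpa using (hasDerivAt_id t₀).const_mul (-lam)
  have h2 : HasDerivAt (fun t : ℝ => -lam * Real.exp (-lam * t))
      (-lam * (Real.exp (-lam * t₀) * -lam)) t₀ := by
    have := ((Real.hasDerivAt_exp (-lam * t₀)).comp t₀ h1).const_mul (-lam)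
    simpa [Function.comp] using this
  rw [h2.deriv]
  ring

lemma contDiff_expb (lam C : ℝ) : ContDiff ℝ 2 (fun t : ℝ => Real.exp (-lam * t) - C) :=
  (Real.contDiff_exp.comp (contDiff_const.mul contDiff_id)).sub contDiff_const

/-! ### the auxiliary strictly superharmonic weight ψ -/

noncomputable def psi : EuclideanSpace ℝ (Fin n) → ℝ := fun y => (quad 1 0 y) ^ (-(1/2) : ℝ)

lemma psi_pos (x : E) : 0 < psi (n := n) x :=
  Real.rpow_pos_of_pos (lt_of_lt_of_le one_pos (quad_nonneg 1 0 x)) _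

lemma psi_le_one (x : E) : psi (n := n) x ≤ 1 :=
  Real.rpow_le_one_of_one_le_of_nonpos (quad_nonneg 1 0 x) (by norm_num)

lemma psi_contDiffAt (x : E) : ContDiffAt ℝ 2 (psi (n := n)) x :=
  ((quad_contDiff 1 0).contDiffAt).rpow_const_of_ne
    (ne_of_gt (lt_of_lt_of_le one_pos (quad_nonneg 1 0 x)))

lemma lap_psi_neg (hn : 3 ≤ n) (x : E) : lap (psi (n := n)) x < 0 := by
  have hNpos : 0 < quad 1 0 x := lt_of_lt_of_le one_pos (quad_nonneg 1 0 x)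
  have hN1 : 1 ≤ quad 1 0 x := quad_nonneg 1 0 x
  unfold psi
  rw [lap_comp (quad_contDiff 1 0).contDiffAt (Real.contDiffAt_rpow_const_of_ne hNpos.ne'),
    quad_d1_sq, lap_quad, deriv2_rpow hNpos, deriv_rpow_pos hNpos]
  set N := quad 1 0 x with hNdef
  have hkey : N ^ ((-(1/2) - 1 : ℝ)) = N * N ^ ((-(1/2) - 2 : ℝ)) := by
    have h1 : (-(1/2) - 1 : ℝ) = 1 + (-(1/2) - 2 : ℝ) := by ring
    rw [h1, Real.rpow_add hNpos, Real.rpow_one]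
  rw [hkey]
  have hP : (0:ℝ) < N ^ ((-(1/2) - 2 : ℝ)) := Real.rpow_pos_of_pos hNpos _
  have hn' : (3:ℝ) ≤ (n:ℝ) := by exact_mod_cast hn
  nlinarith [hP, hN1, hn', mul_pos hP (lt_of_lt_of_le one_pos hN1),
    mul_nonneg (mul_nonneg hP.le (by linarith : (0:ℝ) ≤ N)) (sub_nonneg.mpr hn')]

/-! ### barrier lap positivity -/

lemma lap_barrier {lam C : ℝ} (hlam : 0 < lam) (z x : E)
    (hq : (n:ℝ) < 2 * lam * quad 0 z x) :
    0 < lap (fun y => Real.exp (-lam * quad 0 z y) - C) x := by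
  rw [lap_comp (quad_contDiff 0 z).contDiffAt (contDiff_expb lam C).contDiffAt,
    quad_d1_sq, lap_quad, deriv2_expb, (hasDerivAt_expb lam C _).deriv]
  have hQ : 0 ≤ quad 0 z x := quad_nonneg 0 z x
  have he : 0 < Real.exp (-lam * quad 0 z x) := Real.exp_pos _
  nlinarith [mul_lt_mul_of_pos_left hq (mul_pos hlam he), mul_pos hlam he]

/-! ### attainment of a positive max -/

lemma exists_max {f : E → ℝ} (hf : Continuous f) (y₀ : E) (hy₀ : 0 < f y₀)
    (hsm : ∀ᶠ x in Filter.cocompact (EuclideanSpace ℝ (Fin n)), f x < f y₀) :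
    ∃ x₁, 0 < f x₁ ∧ ∀ x, f x ≤ f x₁ := by
  obtain ⟨K, hK, hKf⟩ := Filter.hasBasis_cocompact.eventually_iff.mp hsm
  have hC : IsCompact (K ∪ {y₀}) := hK.union isCompact_singleton
  obtain ⟨x₁, hx₁C, hmax⟩ := hC.exists_isMaxOn ⟨y₀, Or.inr rfl⟩ hf.continuousOn
  have hy₀mem : y₀ ∈ K ∪ {y₀} := Or.inr rfl
  refine ⟨x₁, lt_of_lt_of_le hy₀ (hmax hy₀mem), fun x => ?_⟩
  by_cases hx : x ∈ K ∪ {y₀}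
  · exact hmax hx
  · have hxK : x ∈ Kᶜ := fun hxK => hx (Or.inl hxK)
    exact le_trans (hKf hxK).le (hmax hy₀mem)

/-! ### norm, coordinates -/

lemma euclid_normsq (w : E) : ‖w‖^2 = ∑ i, (w i)^2 := by
  rw [EuclideanSpace.norm_eq, Real.sq_sqrt (by positivity)]
  exact Finset.sum_congr rfl fun i _ => by rw [Real.norm_eq_abs, sq_abs]

lemma quad_eq_dist (z y : E) : quad 0 z y = dist y z ^ 2 := by
  rw [dist_eq_norm, euclid_normsq]
  unfold quad
  rw [zero_add]
  exact Finset.sum_congr rfl fun i _ => by rw [PiLp.sub_apply]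

/-! ### strong minimum principle -/

lemma strong_min (hn : 3 ≤ n) {u : E → ℝ} (hu : ContDiff ℝ 2 u) (h0 : ∀ x, 0 ≤ u x)
    (hsuper : ∀ x, lap u x ≤ 0) {x₀ : E} (hx₀ : u x₀ = 0) : ∀ x, u x = 0 := by
  by_contra hne
  push_neg at hne
  obtain ⟨x₁, hx₁⟩ := hne
  haveI : Nonempty (Fin n) := ⟨⟨0, by omega⟩⟩
  set Z : Set (EuclideanSpace ℝ (Fin n)) := {x | u x = 0} with hZdef
  have hZc : IsClosed Z := isClosed_eq hu.continuous continuous_const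
  have hZne : Z.Nonempty := ⟨x₀, hx₀⟩
  have hx₁Z : x₁ ∉ Z := hx₁
  have hRpos : 0 < Metric.infDist x₁ Z := (hZc.notMem_iff_infDist_pos hZne).mp hx₁Z
  set R := Metric.infDist x₁ Z with hRdef
  obtain ⟨y₀, hy₀Z, hy₀d⟩ := hZc.exists_infDist_eq_dist hZne x₁
  have hball_pos : ∀ y, dist y x₁ < R → 0 < u y := by
    intro y hy
    rcases (h0 y).lt_or_eq with h | h
    · exact h
    · exfalso
      have hyZ : y ∈ Z := h.symm
      have h2 : Metric.infDist x₁ Z ≤ dist x₁ y := Metric.infDist_le_dist_of_mem (x := x₁) hyZ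
      rw [dist_comm] at h2
      exact absurd (lt_of_le_of_lt h2 hy) (lt_irrefl R)
  -- minimum on the inner sphere
  have hsne : (Metric.sphere x₁ (R/2)).Nonempty :=
    NormedSpace.sphere_nonempty.mpr (by positivity)
  obtain ⟨ym, hymS, hymmin⟩ :=
    (isCompact_sphere x₁ (R/2)).exists_isMinOn hsne hu.continuous.continuousOn
  have hymd : dist ym x₁ = R/2 := Metric.mem_sphere.mp hymS
  have hm : 0 < u ym := hball_pos ym (by rw [hymd]; linarith)
  set m := u ym with hmdef
  set lam := 4*(n:ℝ)/R^2 with hlamdef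
  have hnR : (0:ℝ) < (n:ℝ) := by positivity
  have hlam : 0 < lam := by positivity
  set C₀ := Real.exp (-lam * R^2) with hC₀def
  set bar := fun y => Real.exp (-lam * quad 0 x₁ y) - C₀ with hbardef
  have hbar_le_one : ∀ y, bar y ≤ 1 := by
    intro y
    have h1 : Real.exp (-lam * quad 0 x₁ y) ≤ 1 := by
      rw [Real.exp_le_one_iff]
      have := quad_nonneg 0 x₁ y
      nlinarith
    have h2 : 0 < C₀ := Real.exp_pos _
    simp only [hbardef]; linarith
  have hbar_cd : ContDiff ℝ 2 bar := (contDiff_expb lam C₀).comp (quad_contDiff 0 x₁)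
  set φ := fun y => m * bar y + (-1) * u y with hφdef
  have hφ_cd : ContDiff ℝ 2 φ :=
    (contDiff_const.mul hbar_cd).add (contDiff_const.mul hu)
  set A := Metric.closedBall x₁ R ∩ (Metric.ball x₁ (R/2))ᶜ with hAdef
  have hAcomp : IsCompact A :=
    (isCompact_closedBall x₁ R).inter_right Metric.isOpen_ball.isClosed_compl
  have hAne : A.Nonempty := by
    refine ⟨ym, ?_, ?_⟩
    · rw [Metric.mem_closedBall, hymd]; linarith
    · rw [Set.mem_compl_iff, Metric.mem_ball, hymd]; simp
  -- the comparison claim on the annulus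
  have hclaim : ∀ y ∈ A, φ y ≤ 0 := by
    by_contra hcl
    push_neg at hcl
    obtain ⟨y', hy'A, hy'⟩ := hcl
    obtain ⟨ys, hysA, hysmax⟩ := hAcomp.exists_isMaxOn ⟨y', hy'A⟩ hφ_cd.continuous.continuousOn
    have hφys : 0 < φ ys := lt_of_lt_of_le hy' (hysmax hy'A)
    have hys1 : dist ys x₁ ≠ R/2 := by
      intro hd
      have hu_ys : m ≤ u ys := hymmin (Metric.mem_sphere.mpr hd)
      have : φ ys ≤ 0 := by
        have := hbar_le_one ys
        simp only [hφdef]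
        nlinarith
      linarith
    have hys2 : dist ys x₁ ≠ R := by
      intro hd
      have : bar ys = 0 := by
        simp only [hbardef, quad_eq_dist, hd, hC₀def, sub_self]
      have : φ ys ≤ 0 := by
        simp only [hφdef, this]
        have := h0 ys
        nlinarith
      linarith
    have hyscb : dist ys x₁ ≤ R := Metric.mem_closedBall.mp hysA.1
    have hysb : R/2 ≤ dist ys x₁ := by
      have := hysA.2
      rw [Set.mem_compl_iff, Metric.mem_ball] at this
      linarith [not_lt.mp this]
    have hysin1 : R/2 < dist ys x₁ := lt_of_le_of_ne hysb (Ne.symm hys1)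
    have hysin2 : dist ys x₁ < R := lt_of_le_of_ne hyscb hys2
    -- A is a neighborhood of ys
    have hU : IsOpen {y : EuclideanSpace ℝ (Fin n) | R/2 < dist y x₁ ∧ dist y x₁ < R} := by
      have : {y : EuclideanSpace ℝ (Fin n) | R/2 < dist y x₁ ∧ dist y x₁ < R}
          = (fun y => dist y x₁) ⁻¹' (Set.Ioo (R/2) R) := rfl
      rw [this]
      exact isOpen_Ioo.preimage (continuous_id.dist continuous_const)
    have hAnhds : A ∈ 𝓝 ys := by
      rw [mem_nhds_iff]
      refine ⟨_, ?_, hU, ⟨hysin1, hysin2⟩⟩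
      intro y hy
      exact ⟨Metric.mem_closedBall.mpr hy.2.le, by
        rw [Set.mem_compl_iff, Metric.mem_ball]; exact not_lt.mpr hy.1.le⟩
    have hlocmax : IsLocalMax φ ys := hysmax.isLocalMax hAnhds
    have hlapφ : lap φ ys ≤ 0 := lap_nonpos_of_isLocalMax hφ_cd.contDiffAt hlocmax
    have hlapbar : 0 < lap bar ys := by
      apply lap_barrier hlam
      rw [quad_eq_dist]
      have h4 : R^2/4 < dist ys x₁ ^2 := by nlinarith
      have : 2 * lam * (R^2/4) = 2*(n:ℝ) := by field_simp [hlamdef]; rw [hlamdef, div_mul_cancel₀ _ (by positivity)]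
      nlinarith
    have : lap φ ys = m * lap bar ys + (-1) * lap u ys := by
      rw [hφdef, lap_add (contDiffAt_const.mul hbar_cd.contDiffAt)
        (contDiffAt_const.mul hu.contDiffAt), lap_const_mul m hbar_cd.contDiffAt,
        lap_const_mul (-1) hu.contDiffAt]
    have : 0 < lap φ ys := by
      rw [this]
      have := hsuper ys
      nlinarith
    linarith
  -- gradient contradiction at y₀
  have hdist : dist x₁ y₀ = R := hy₀d.symm
  set dvec := x₁ - y₀ with hdvecdef
  set g := fun t : ℝ => u (y₀ + t • dvec) with hgdef
  have hg0 : g 0 = 0 := by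
    simp only [hgdef, zero_smul, add_zero]
    exact hy₀Z
  have hdist_line : ∀ t : ℝ, 0 ≤ t → t ≤ 1 → dist (y₀ + t • dvec) x₁ = (1-t) * R := by
    intro t ht0 ht1
    rw [dist_eq_norm]
    have : y₀ + t • dvec - x₁ = -((1-t) • dvec) := by
      rw [hdvecdef, sub_smul, one_smul]
      abel
    rw [this, norm_neg, norm_smul]
    rw [Real.norm_eq_abs, abs_of_nonneg (by linarith)]
    have : ‖dvec‖ = R := by
      rw [hdvecdef, ← dist_eq_norm, hdist]
    rw [this]
  -- comparison for small positive t
  have hkey : ∀ t, t ∈ Set.Ioc (0:ℝ) (1/2) →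
      m * (Real.exp (-lam * ((1-t)^2 * R^2)) - C₀) ≤ g t := by
    intro t ht
    obtain ⟨ht0, ht1⟩ := ht
    have hd : dist (y₀ + t • dvec) x₁ = (1-t) * R := hdist_line t ht0.le (by linarith)
    have hmem : (y₀ + t • dvec) ∈ A := by
      constructor
      · rw [Metric.mem_closedBall, hd]; nlinarith
      · rw [Set.mem_compl_iff, Metric.mem_ball, hd]
        push_neg
        nlinarith
    have := hclaim _ hmem
    have hbarval : bar (y₀ + t • dvec) = Real.exp (-lam * ((1-t)^2 * R^2)) - C₀ := by
      simp only [hbardef, quad_eq_dist, hd]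
      ring_nf
    simp only [hφdef, hbarval] at this ⊢
    linarith [this]
  -- derivative of g at 0 is 0 since u has a global min there
  have hgmin : IsLocalMin g 0 := by
    apply Filter.Eventually.of_forall
    intro t
    rw [hg0]
    exact h0 _
  have hgderiv : deriv g 0 = 0 := hgmin.deriv_eq_zero
  have hgdiff : DifferentiableAt ℝ g 0 := by
    have : ContDiffAt ℝ 2 g 0 := contDiffAt_line_comp dvec hu.contDiffAt
    exact this.differentiableAt (by norm_num)
  -- eta and its derivative
  set Eta := fun t : ℝ => m * (Real.exp (-lam * ((1-t)^2 * R^2)) - C₀) with hEtadef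
  have hEta0 : Eta 0 = 0 := by
    simp only [hEtadef, hC₀def]
    norm_num
  have hEtaderiv : HasDerivAt Eta (m * (Real.exp (-lam * R^2) * (2 * lam * R^2))) 0 := by
    have h1 : HasDerivAt (fun t : ℝ => (1-t)) (-1) 0 :=
      (hasDerivAt_id (0:ℝ)).const_sub 1
    have h2 : HasDerivAt (fun t : ℝ => (1-t)^2) (2 * (1-(0:ℝ))^1 * (-1)) 0 := by
      exact h1.pow 2
    have hF : HasDerivAt (fun t : ℝ => -lam * ((1-t)^2 * R^2)) (2 * lam * R^2) 0 := by
      have h3 : HasDerivAt (fun t : ℝ => -lam * ((1-t)^2 * R^2))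
          (-lam * ((2 * (1-(0:ℝ))^1 * (-1)) * R^2)) 0 :=
        ((h2.mul_const (R^2)).const_mul (-lam))
      convert h3 using 1
      ring
    have hexp := (Real.hasDerivAt_exp ((fun t : ℝ => -lam * ((1-t)^2 * R^2)) 0)).comp 0 hF
    have hF0 : (fun t : ℝ => -lam * ((1-t)^2 * R^2)) 0 = -lam * R^2 := by norm_num
    rw [hF0] at hexp
    have h5 := (hexp.sub_const C₀).const_mul m
    exact h5.congr_of_eventuallyEq
      (Filter.Eventually.of_forall fun t => by simp [hEtadef, Function.comp])
  have hEtapos : 0 < m * (Real.exp (-lam * R^2) * (2 * lam * R^2)) := by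
    have := Real.exp_pos (-lam * R^2)
    positivity
  -- slope comparison
  have hslopeg : Filter.Tendsto (fun t => g t / t) (𝓝[>] (0:ℝ)) (𝓝 0) := by
    have h1 := hgdiff.hasDerivAt
    rw [hgderiv] at h1
    rw [hasDerivAt_iff_tendsto_slope] at h1
    have h2 : Filter.Tendsto (slope g 0) (𝓝[>] (0:ℝ)) (𝓝 0) :=
      h1.mono_left (nhdsWithin_mono 0 (fun t ht => ne_of_gt ht))
    refine h2.congr' ?_
    filter_upwards [self_mem_nhdsWithin] with t ht
    rw [slope_def_field, hg0]
    simp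
  have hslopeEta : Filter.Tendsto (fun t => Eta t / t) (𝓝[>] (0:ℝ))
      (𝓝 (m * (Real.exp (-lam * R^2) * (2 * lam * R^2)))) := by
    have h1 := hEtaderiv
    rw [hasDerivAt_iff_tendsto_slope] at h1
    have h2 := h1.mono_left (nhdsWithin_mono 0 (fun t (ht : t ∈ Set.Ioi (0:ℝ)) => ne_of_gt ht))
    refine h2.congr' ?_
    filter_upwards [self_mem_nhdsWithin] with t ht
    rw [slope_def_field, hEta0]
    simp
  have hcompare : ∀ᶠ t in 𝓝[>] (0:ℝ), Eta t / t ≤ g t / t := by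
    have hIoc : Set.Ioc (0:ℝ) (1/2) ∈ 𝓝[>] (0:ℝ) :=
      Ioc_mem_nhdsGT (by norm_num : (0:ℝ) < 1/2)
    filter_upwards [hIoc, self_mem_nhdsWithin] with t ht ht'
    have ht0 : (0:ℝ) < t := ht'
    have h := hkey t ht
    gcongr
  have hfinal := le_of_tendsto_of_tendsto hslopeEta hslopeg hcompare
  linarith

/-! ### no positive max for functions with positive lap at positive local maxima -/

lemma no_pos_max {W : E → ℝ} (hWc : Continuous W)
    (hsm : ∀ m₀ : ℝ, 0 < m₀ → ∀ᶠ y in Filter.cocompact (EuclideanSpace ℝ (Fin n)), W y < m₀)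
    (hloc : ∀ x₁, 0 < W x₁ → IsLocalMax W x₁ → False) : ∀ y, W y ≤ 0 := by
  by_contra hcon
  push_neg at hcon
  obtain ⟨y₀, hy₀⟩ := hcon
  obtain ⟨x₁, hx₁pos, hx₁max⟩ := exists_max hWc y₀ hy₀ (hsm (W y₀) hy₀)
  exact hloc x₁ hx₁pos (Filter.Eventually.of_forall fun y => hx₁max y)

theorem stmt_10 (n : ℕ) (hn : 3 ≤ n) (p q r s : ℝ)
    (hp : 1 ≤ p) (hq : 1 ≤ q) (hr : 0 ≤ r) (hs : 0 ≤ s)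
    (h1 : q - r ≤ p - s) (h2 : -1 < q - r) (hps : s ≤ p)
    (a b : ℝ)
    (ha : a = n * (p * q - (r - 1) * (s - 1)) / (2 * (p - s + 1)))
    (hb : b = n * (p * q - (r - 1) * (s - 1)) / (2 * (q - r + 1)))
    (ha' : (n : ℝ) / (n - 2) < a) (hb' : (n : ℝ) / (n - 2) < b)
    (u v : EuclideanSpace ℝ (Fin n) → ℝ)
    (hu : ContDiff ℝ 2 u) (hv : ContDiff ℝ 2 v)
    (hupos : ∀ x, 0 ≤ u x)
    (hequ : ∀ x, - lap u x = |v x| ^ p * |u x| ^ (r - 1) * u x)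
    (heqv : ∀ x, - lap v x = |u x| ^ q * |v x| ^ (s - 1) * v x)
    (K : ℝ)
    (hdecay : ∀ x, |u x| ^ a + |v x| ^ b ≤ K * (1 + ‖x‖ ^ (n : ℝ))⁻¹) :
    ∀ x, |v x| ^ (p - s + 1) / (p - s + 1) ≤ u x ^ (q - r + 1) / (q - r + 1) := by
  have hn3 : (3:ℝ) ≤ (n:ℝ) := by exact_mod_cast hn
  have hα1 : 0 < p - s + 1 := by linarith
  have hβ1 : 0 < q - r + 1 := by linarith
  have hα0 : 0 ≤ p - s := by linarith
  have hb0 : 0 < b := lt_trans (div_pos (by linarith) (by linarith)) hb'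
  -- superharmonicity of u
  have hsuper : ∀ y, lap u y ≤ 0 := by
    intro y
    have h := hequ y
    have hpos : 0 ≤ |v y| ^ p * |u y| ^ (r - 1) * u y :=
      mul_nonneg (mul_nonneg (Real.rpow_nonneg (abs_nonneg _) _)
        (Real.rpow_nonneg (abs_nonneg _) _)) (hupos y)
    linarith
  -- smallness of v at infinity
  have hvsmall : ∀ m₀ : ℝ, 0 < m₀ →
      ∀ᶠ y in Filter.cocompact (EuclideanSpace ℝ (Fin n)), |v y| < m₀ := by
    intro m₀ hm₀
    have h3 : Filter.Tendsto (fun R : ℝ => R ^ (n:ℝ)) Filter.atTop Filter.atTop :=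
      tendsto_rpow_atTop (by positivity)
    have h4 : Filter.Tendsto (fun R : ℝ => 1 + R ^ (n:ℝ)) Filter.atTop Filter.atTop :=
      Filter.tendsto_atTop_add_const_left _ 1 h3
    have h5 : Filter.Tendsto (fun R : ℝ => K * (1 + R ^ (n:ℝ))⁻¹) Filter.atTop (𝓝 0) := by
      have := h4.inv_tendsto_atTop.const_mul K
      simpa using this
    have htend : Filter.Tendsto (fun y : EuclideanSpace ℝ (Fin n) => K * (1 + ‖y‖ ^ (n:ℝ))⁻¹)
        (Filter.cocompact _) (𝓝 0) := h5.comp tendsto_norm_cocompact_atTop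
    have hev : ∀ᶠ y in Filter.cocompact (EuclideanSpace ℝ (Fin n)),
        K * (1 + ‖y‖ ^ (n:ℝ))⁻¹ < m₀ ^ b :=
      htend.eventually_lt_const (Real.rpow_pos_of_pos hm₀ b)
    filter_upwards [hev] with y hy
    by_contra hcon
    push_neg at hcon
    have h6 : m₀ ^ b ≤ |v y| ^ b := Real.rpow_le_rpow hm₀.le hcon hb0.le
    have h7 : |v y| ^ b ≤ K * (1 + ‖y‖ ^ (n:ℝ))⁻¹ := by
      have := hdecay y
      have h8 : 0 ≤ |u y| ^ a := Real.rpow_nonneg (abs_nonneg _) _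
      linarith
    linarith
  intro x
  by_cases hzero : ∃ x₀, u x₀ = 0
  · -- u ≡ 0, hence v ≡ 0
    obtain ⟨x₀, hx₀⟩ := hzero
    have hu0 : ∀ y, u y = 0 := strong_min hn hu hupos hsuper hx₀
    have hlapv : ∀ y, lap v y = 0 := by
      intro y
      have h := heqv y
      rw [hu0 y, abs_zero, Real.zero_rpow (by linarith : q ≠ 0)] at h
      simp at h
      linarith
    have hψc : Continuous (psi (n:=n)) :=
      continuous_iff_continuousAt.mpr fun y => (psi_contDiffAt y).continuousAt
    have hvle : ∀ e : ℝ, e = 1 ∨ e = -1 → ∀ ε : ℝ, 0 < ε →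
        ∀ y, e * v y + (-ε) * psi y ≤ 0 := by
      intro e he ε hε
      apply no_pos_max
      · exact (continuous_const.mul hv.continuous).add (continuous_const.mul hψc)
      · intro m₀ hm₀
        filter_upwards [hvsmall m₀ hm₀] with y hy
        have h1 : e * v y ≤ |v y| := by
          rcases he with he | he <;> rw [he] <;> simp [le_abs_self, neg_le_abs]
        have h2 : 0 < psi (n:=n) y := psi_pos y
        linarith only [h1, hy, mul_pos hε h2]
      · intro x₁ hWpos hWmax
        have hcd : ContDiffAt ℝ 2 (fun y => e * v y + (-ε) * psi (n:=n) y) x₁ :=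
          (contDiffAt_const.mul hv.contDiffAt).add
            (contDiffAt_const.mul (psi_contDiffAt x₁))
        have hlapW := lap_nonpos_of_isLocalMax hcd hWmax
        have heq : lap (fun y => e * v y + (-ε) * psi (n:=n) y) x₁
            = e * lap v x₁ + (-ε) * lap (psi (n:=n)) x₁ := by
          rw [lap_add (contDiffAt_const.mul hv.contDiffAt)
            (contDiffAt_const.mul (psi_contDiffAt x₁)),
            lap_const_mul e hv.contDiffAt, lap_const_mul (-ε) (psi_contDiffAt x₁)]
        rw [heq, hlapv x₁] at hlapW
        have hψ := lap_psi_neg hn x₁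
        have := mul_pos hε (neg_pos.mpr hψ)
        linarith only [hlapW, this]
    have hv0 : v x = 0 := by
      have h1 : ∀ ε : ℝ, 0 < ε → v x ≤ 0 + ε := by
        intro ε hε
        have h := hvle 1 (Or.inl rfl) ε hε x
        have hψ1 := psi_le_one (n:=n) x
        have hh : ε * psi (n:=n) x ≤ ε := mul_le_of_le_one_right hε.le hψ1
        linarith only [h, hh]
      have h2 : ∀ ε : ℝ, 0 < ε → -v x ≤ 0 + ε := by
        intro ε hε
        have h := hvle (-1) (Or.inr rfl) ε hε x
        have hψ1 := psi_le_one (n:=n) x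
        have hh : ε * psi (n:=n) x ≤ ε := mul_le_of_le_one_right hε.le hψ1
        linarith only [h, hh]
      have h3 : v x ≤ 0 := le_of_forall_pos_le_add h1
      have h4 : -v x ≤ 0 := le_of_forall_pos_le_add h2
      linarith
    rw [hv0, hu0 x, abs_zero, Real.zero_rpow (by linarith : p - s + 1 ≠ 0),
      Real.zero_rpow (by linarith : q - r + 1 ≠ 0), zero_div, zero_div]
  · -- u > 0 everywhere
    push_neg at hzero
    have hupos' : ∀ y, 0 < u y := fun y => lt_of_le_of_ne (hupos y) (Ne.symm (hzero y))
    set σ := (q - r + 1) / (p - s + 1) with hσdef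
    have hσ0 : 0 < σ := div_pos hβ1 hα1
    have hσ1 : σ ≤ 1 := (div_le_one hα1).mpr (by linarith)
    set k := ((p - s + 1) / (q - r + 1)) ^ ((1:ℝ)/(p - s + 1)) with hkdef
    have hk0 : 0 < k := Real.rpow_pos_of_pos (div_pos hα1 hβ1) _
    have hkpow : k ^ (p - s + 1) = (p - s + 1) / (q - r + 1) := by
      rw [hkdef, ← Real.rpow_mul (div_pos hα1 hβ1).le, one_div,
        inv_mul_cancel₀ (ne_of_gt hα1), Real.rpow_one]
    have hψc : Continuous (psi (n:=n)) :=
      continuous_iff_continuousAt.mpr fun y => (psi_contDiffAt y).continuousAt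
    have huσc : Continuous (fun y => u y ^ σ) :=
      continuous_iff_continuousAt.mpr fun y =>
        hu.continuous.continuousAt.rpow_const (Or.inr hσ0.le)
    clear_value σ k
    -- the key comparison, for every ε > 0
    have hmain : ∀ ε : ℝ, 0 < ε →
        ∀ y, |v y| + ((-k) * (u y ^ σ) + (-ε) * psi (n:=n) y) ≤ 0 := by
      intro ε hε
      apply no_pos_max
      · exact hv.continuous.abs.add
          ((continuous_const.mul huσc).add (continuous_const.mul hψc))
      · intro m₀ hm₀
        filter_upwards [hvsmall m₀ hm₀] with y hy
        have h2 : 0 < psi (n:=n) y := psi_pos y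
        have h3 : 0 < u y ^ σ := Real.rpow_pos_of_pos (hupos' y) _
        have h4 : 0 < k * (u y ^ σ) := mul_pos hk0 h3
        have h5 : 0 < ε * psi (n:=n) y := mul_pos hε h2
        linarith only [hy, h4, h5]
      · intro x₁ hWpos hWmax
        set U := u x₁ with hUdef
        have hU0 : 0 < U := hupos' x₁
        set V := |v x₁| with hVdef
        set e : ℝ := if 0 ≤ v x₁ then 1 else -1 with hedef
        have hev : e * v x₁ = V := by
          rw [hVdef, hedef]
          by_cases hcase : 0 ≤ v x₁
          · rw [if_pos hcase, abs_of_nonneg hcase, one_mul]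
          · rw [if_neg hcase, abs_of_neg (not_le.mp hcase)]; ring
        have heabs : ∀ y, e * v y ≤ |v y| := by
          intro y
          rw [hedef]
          by_cases hcase : 0 ≤ v x₁
          · rw [if_pos hcase, one_mul]; exact le_abs_self _
          · rw [if_neg hcase, neg_one_mul]
            exact neg_le_abs _
        have hψx := psi_pos (n:=n) x₁
        have huσ0 : 0 < U ^ σ := Real.rpow_pos_of_pos hU0 _
        have hVlb : k * U ^ σ + ε * psi (n:=n) x₁ < V := by
          linarith only [hWpos]
        have hV0 : 0 < V := by
          linarith only [hVlb, mul_pos hk0 huσ0, mul_pos hε hψx]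
        -- the C² local representative
        set Wt := fun y => e * v y + ((-k) * (u y ^ σ) + (-ε) * psi (n:=n) y) with hWtdef
        have hWtcd : ContDiffAt ℝ 2 Wt x₁ := by
          refine (contDiffAt_const.mul hv.contDiffAt).add (ContDiffAt.add ?_ ?_)
          · exact contDiffAt_const.mul (hu.contDiffAt.rpow_const_of_ne hU0.ne')
          · exact contDiffAt_const.mul (psi_contDiffAt x₁)
        have hWtmax : IsLocalMax Wt x₁ := by
          refine hWmax.mono fun y hy => ?_
          have h1 : Wt y ≤ |v y| + ((-k) * (u y ^ σ) + (-ε) * psi (n:=n) y) := by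
            simp only [hWtdef]
            have := heabs y
            linarith
          have h2 : Wt x₁ = |v x₁| + ((-k) * (u x₁ ^ σ) + (-ε) * psi (n:=n) x₁) := by
            simp only [hWtdef, hev, hVdef]
          rw [h2]
          exact le_trans h1 hy
        have hlapWt := lap_nonpos_of_isLocalMax hWtcd hWtmax
        -- compute the laplacian
        have hlapsplit : lap Wt x₁ = e * lap v x₁
            + ((-k) * lap (fun y => u y ^ σ) x₁ + (-ε) * lap (psi (n:=n)) x₁) := by
          rw [hWtdef, lap_add (contDiffAt_const.mul hv.contDiffAt)
              (ContDiffAt.add (contDiffAt_const.mul (hu.contDiffAt.rpow_const_of_ne hU0.ne'))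
                (contDiffAt_const.mul (psi_contDiffAt x₁))),
            lap_add (contDiffAt_const.mul (hu.contDiffAt.rpow_const_of_ne hU0.ne'))
              (contDiffAt_const.mul (psi_contDiffAt x₁)),
            lap_const_mul e hv.contDiffAt,
            lap_const_mul (-k) (hu.contDiffAt.rpow_const_of_ne hU0.ne'),
            lap_const_mul (-ε) (psi_contDiffAt x₁)]
        have hlapu : lap u x₁ = -(V ^ p * U ^ r) := by
          have h := hequ x₁
          have hur : |u x₁| ^ (r - 1) * u x₁ = U ^ r := by
            rw [abs_of_pos hU0, ← hUdef, ← Real.rpow_add_one hU0.ne' (r-1)]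
            ring_nf
          rw [mul_assoc, hur, ← hVdef] at h
          linarith
        have hlapv' : e * lap v x₁ = -(U ^ q * V ^ s) := by
          have h := heqv x₁
          rw [abs_of_pos hU0, ← hVdef] at h
          have h2 : e * lap v x₁ = -(U ^ q * (V ^ (s-1) * (e * v x₁))) := by
            linear_combination (-e) * h
          rw [hev] at h2
          rw [h2, ← Real.rpow_add_one hV0.ne' (s-1)]
          ring_nf
        have hlapcomp := lap_comp (φ := fun t : ℝ => t ^ σ) hu.contDiffAt
          (Real.contDiffAt_rpow_const_of_ne hU0.ne')
        rw [deriv2_rpow hU0, deriv_rpow_pos hU0] at hlapcomp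
        set Q := ∑ i, (deriv (fun t : ℝ => u (x₁ + t • EuclideanSpace.single i 1)) 0)^2
          with hQdef
        have hQ0 : 0 ≤ Q := Finset.sum_nonneg fun i _ => sq_nonneg _
        have hψneg := lap_psi_neg hn x₁
        -- the key algebraic inequality
        have hVlb' : k * U ^ σ ≤ V := by linarith only [hVlb, mul_pos hε hψx]
        have e2 : k^(p-s) * U^(σ*(p-s)) ≤ V^(p-s) := by
          calc k^(p-s) * U^(σ*(p-s)) = (k * U^σ)^(p-s) := by
                rw [Real.mul_rpow hk0.le (Real.rpow_nonneg hU0.le _), Real.rpow_mul hU0.le]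
          _ ≤ V^(p-s) := Real.rpow_le_rpow (mul_pos hk0 huσ0).le hVlb' hα0
        have e1 : V ^ p = V ^ (p-s) * V ^ s := by
          rw [← Real.rpow_add hV0]
          ring_nf
        have e3 : σ * k^(p-s+1) = 1 := by
          rw [hσdef, hkpow]
          field_simp
        have e4 : k^(p-s+1) = k^(p-s) * k := by
          rw [Real.rpow_add_one hk0.ne' (p-s)]
        have e5 : U^(σ-1) * U^(σ*(p-s)) * U^r = U^q := by
          rw [← Real.rpow_add hU0, ← Real.rpow_add hU0]
          congr 1
          have : σ * (p - s + 1) = q - r + 1 := by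
            rw [hσdef]; field_simp
          nlinarith [this]
        have hkey : U^q * V^s ≤ k * σ * U^(σ-1) * V^p * U^r := by
          have hpos1 : 0 < k * σ * U^(σ-1) * U^r :=
            mul_pos (mul_pos (mul_pos hk0 hσ0) (Real.rpow_pos_of_pos hU0 _))
              (Real.rpow_pos_of_pos hU0 _)
          have step : k * σ * U^(σ-1) * U^r * (k^(p-s) * U^(σ*(p-s)) * V^s)
              ≤ k * σ * U^(σ-1) * U^r * (V^(p-s) * V^s) := by
            apply mul_le_mul_of_nonneg_left _ hpos1.le
            exact mul_le_mul_of_nonneg_right e2 (Real.rpow_nonneg hV0.le _)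
          have lhs_eq : k * σ * U^(σ-1) * U^r * (k^(p-s) * U^(σ*(p-s)) * V^s)
              = (σ * (k^(p-s) * k)) * (U^(σ-1) * U^(σ*(p-s)) * U^r) * V^s := by ring
          rw [lhs_eq, ← e4, e3, e5, one_mul] at step
          calc U^q * V^s = V^s * U^q := by ring
          _ ≤ k * σ * U^(σ-1) * U^r * (V^(p-s) * V^s) := by linarith [step]
          _ = k * σ * U^(σ-1) * (V^(p-s) * V^s) * U^r := by ring
          _ = k * σ * U^(σ-1) * V^p * U^r := by rw [← e1]
        -- conclude
        rw [hlapsplit, hlapv', hlapcomp, hlapu] at hlapWt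
        obtain ⟨Lψ, hLψeq⟩ : ∃ L : ℝ, lap (psi (n:=n)) x₁ = L := ⟨_, rfl⟩
        rw [hLψeq] at hlapWt
        have hψneg' : Lψ < 0 := hLψeq ▸ hψneg
        have hposQ : 0 ≤ k * (σ * (1 - σ) * U^(σ-2)) * Q :=
          mul_nonneg (mul_nonneg hk0.le (mul_nonneg (mul_nonneg hσ0.le (by linarith only [hσ1]))
            (Real.rpow_pos_of_pos hU0 _).le)) hQ0
        have hεψ : 0 < ε * (-Lψ) := mul_pos hε (by linarith only [hψneg'])
        clear_value U V Q
        have expand : -(U^q*V^s) + (-k * (σ*(σ-1)*U^(σ-2)*Q + σ*U^(σ-1)*(-(V^p*U^r))) + -ε*Lψ)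
            = (k*σ*U^(σ-1)*V^p*U^r - U^q*V^s) + k*(σ*(1-σ)*U^(σ-2))*Q + ε*(-Lψ) := by
          ring
        rw [expand] at hlapWt
        linarith only [hkey, hposQ, hεψ, hlapWt]
    -- let ε → 0
    have hfin : |v x| ≤ k * u x ^ σ := by
      apply le_of_forall_pos_le_add
      intro ε hε
      have h := hmain ε hε x
      have hψ1 := psi_le_one (n:=n) x
      have hh : ε * psi (n:=n) x ≤ ε := mul_le_of_le_one_right hε.le hψ1
      linarith only [h, hh]
    have h9 : |v x| ^ (p-s+1) ≤ (k * u x ^ σ)^(p-s+1) :=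
      Real.rpow_le_rpow (abs_nonneg _) hfin (by linarith)
    have h10 : (k * u x ^ σ)^(p-s+1) = (p-s+1)/(q-r+1) * u x ^ (q-r+1) := by
      rw [Real.mul_rpow hk0.le (Real.rpow_nonneg (hupos x) _), hkpow,
        ← Real.rpow_mul (hupos x)]
      have hσA : σ * (p-s+1) = q-r+1 := by
        rw [hσdef]; field_simp
      rw [hσA]
    rw [div_le_div_iff₀ hα1 hβ1]
    have h11 := h9.trans_eq h10
    have h12 : 0 ≤ u x ^ (q-r+1) := Real.rpow_nonneg (hupos x) _
    have h14 : (p-s+1)/(q-r+1) * u x ^ (q-r+1) * (q-r+1) = (p-s+1) * u x ^ (q-r+1) := by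
      field_simp
    have h15 := mul_le_mul_of_nonneg_right h11 hβ1.le
    linarith only [h15, h14]
end

section
/- Let n ≥ 3, s ∈ (0,1), q + s = n/(n-2), b > n/(n-2), and let (σ_α) be defined by σ₀ = b and 1/σ_{α+1} = s/σ_α + ((n-2)q-2)/n. Then σ_α decreases to n/(n-2), and (n-2)σ_α - n = n((n-2)b - n)s^α / ((n-2)b - ((n-2)b - n)s^α), so that (n-2)σ_α - n is asymptotically equivalent to (n((n-2)b - n)/((n-2)b)) s^α as α → ∞. -/
open Filter

theorem stmt_12 (n : ℕ) (hn : 3 ≤ n) (q s b : ℝ)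
    (hs0 : 0 < s) (hs1 : s < 1)
    (hqs : q + s = (n : ℝ) / (n - 2))
    (hb : (n : ℝ) / (n - 2) < b)
    (σ : ℕ → ℝ) (hσpos : ∀ α, 0 < σ α) (hσ0 : σ 0 = b)
    (hσrec : ∀ α, 1 / σ (α + 1) = s / σ α + (((n : ℝ) - 2) * q - 2) / n) :
    Antitone σ ∧
    Tendsto σ atTop (nhds ((n : ℝ) / (n - 2))) ∧
    (∀ α, ((n : ℝ) - 2) * σ α - n =
      (n : ℝ) * (((n : ℝ) - 2) * b - n) * s ^ α /
        (((n : ℝ) - 2) * b - (((n : ℝ) - 2) * b - n) * s ^ α)) ∧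
    Tendsto (fun α => (((n : ℝ) - 2) * σ α - n) /
        (((n : ℝ) * (((n : ℝ) - 2) * b - n) / (((n : ℝ) - 2) * b)) * s ^ α))
      atTop (nhds 1) := by
  have hn3 : (3:ℝ) ≤ (n:ℝ) := by exact_mod_cast hn
  set m : ℝ := (n:ℝ) - 2 with hmdef
  have hm0 : 0 < m := by simp only [hmdef]; linarith
  have hn0 : (0:ℝ) < n := by linarith
  have hmb : (n:ℝ) < m * b := by
    rw [div_lt_iff₀ hm0] at hb
    nlinarith
  have hb0 : 0 < b := lt_trans (div_pos hn0 hm0) hb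
  have hq : m * q - 2 = m * (1 - s) := by
    have hq' : q = (n:ℝ)/m - s := by
      have := hqs; linarith
    rw [hq']
    field_simp
    ring
  have hDpos : ∀ α : ℕ, 0 < m * b - (m*b - n) * s ^ α := by
    intro α
    have h1 : s ^ α ≤ 1 := pow_le_one₀ hs0.le hs1.le
    have hsp : 0 < s ^ α := pow_pos hs0 α
    nlinarith
  have key : ∀ α, σ α = (n:ℝ) * b / (m * b - (m*b - n) * s ^ α) := by
    intro α
    induction α with
    | zero =>
      rw [hσ0]
      rw [pow_zero, mul_one]
      have : m * b - (m * b - n) = (n:ℝ) := by ring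
      rw [this, mul_comm, mul_div_assoc, div_self (ne_of_gt hn0), mul_one]
    | succ α ih =>
      have hrec := hσrec α
      rw [ih, hq] at hrec
      have hD := hDpos α
      have hD1 := hDpos (α+1)
      have h2 : 1 / σ (α+1) = (m * b - (m*b - n) * s ^ (α+1)) / ((n:ℝ) * b) := by
        rw [hrec]
        rw [div_div_eq_mul_div]
        rw [div_add_div _ _ (by positivity) (ne_of_gt hn0)]
        rw [div_eq_div_iff (by positivity) (by positivity)]
        ring
      have hσne : σ (α+1) ≠ 0 := ne_of_gt (hσpos (α+1))
      have h3 : σ (α+1) = 1 / (1 / σ (α+1)) := (one_div_one_div _).symm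
      rw [h3, h2, one_div_div]
  have hform : ∀ α, m * σ α - n =
      (n:ℝ) * (m * b - n) * s ^ α / (m * b - (m * b - n) * s ^ α) := by
    intro α
    rw [key α]
    have hD := hDpos α
    have hDne : m * b - (m * b - (n:ℝ)) * s ^ α ≠ 0 := hD.ne'
    field_simp
    ring
  have hanti : Antitone σ := by
    apply antitone_nat_of_succ_le
    intro α
    rw [key α, key (α+1)]
    have hD := hDpos α
    have hD1 := hDpos (α+1)
    rw [div_le_div_iff₀ hD1 hD]
    have hsp : 0 < s ^ α := pow_pos hs0 α
    have hss : s ^ (α+1) ≤ s ^ α := by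
      rw [pow_succ]
      nlinarith
    have hDle : m * b - (m*b - (n:ℝ)) * s ^ α ≤ m * b - (m*b - (n:ℝ)) * s ^ (α+1) := by
      nlinarith
    nlinarith [mul_le_mul_of_nonneg_left hDle (by positivity : (0:ℝ) ≤ (n:ℝ) * b)]
  have hpow : Tendsto (fun α : ℕ => s ^ α) atTop (nhds 0) :=
    tendsto_pow_atTop_nhds_zero_of_lt_one hs0.le hs1
  have hmbne : m * b ≠ 0 := by positivity
  have hDlim : Tendsto (fun α : ℕ => m * b - (m*b - n) * s ^ α) atTop (nhds (m*b)) := by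
    have := (tendsto_const_nhds (x := m*b) (f := atTop (α := ℕ))).sub
      ((tendsto_const_nhds (x := m*b - n) (f := atTop (α := ℕ))).mul hpow)
    simpa using this
  have hσlim : Tendsto σ atTop (nhds ((n : ℝ) / m)) := by
    have h : Tendsto (fun α : ℕ => (n:ℝ) * b / (m * b - (m*b - n) * s ^ α)) atTop
        (nhds ((n:ℝ) * b / (m * b))) :=
      (tendsto_const_nhds.div hDlim hmbne)
    have hval : (n:ℝ) * b / (m * b) = (n:ℝ) / m := by
      rw [mul_comm ((n:ℝ)) b, mul_comm m b, mul_div_mul_left _ _ (ne_of_gt hb0)]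
    rw [hval] at h
    have hfun : σ = fun α => (n:ℝ) * b / (m * b - (m*b - n) * s ^ α) := funext key
    rw [hfun]
    exact h
  refine ⟨hanti, hσlim, hform, ?_⟩
  have hratio : (fun α => (m * σ α - n) /
      (((n:ℝ) * (m * b - n) / (m * b)) * s ^ α)) =
      fun α => m * b / (m * b - (m * b - n) * s ^ α) := by
    funext α
    rw [hform α]
    have hD := hDpos α
    have hsp : (0:ℝ) < s ^ α := pow_pos hs0 α
    have hnum : (0:ℝ) < (n:ℝ) * (m * b - n) := by nlinarith
    have h1 : m * b - (m*b - (n:ℝ)) * s ^ α ≠ 0 := hD.ne'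
    have h2 : s ^ α ≠ 0 := hsp.ne'
    have h4 : (n:ℝ) * (m*b - (n:ℝ)) ≠ 0 := hnum.ne'
    have h5 : m*b - (n:ℝ) ≠ 0 := by linarith
    field_simp
  rw [hratio]
  have h : Tendsto (fun α : ℕ => m * b / (m * b - (m*b - n) * s ^ α)) atTop
      (nhds (m * b / (m * b))) := tendsto_const_nhds.div hDlim hmbne
  rwa [div_self hmbne] at h
end
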